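/- Let X be a compact metric space and f : X → X continuous. If (x, y) is a DC1-pair for f, then there exists (z, w) ∈ ω((x,y), f × f) ⊆ CR(f)² with z ~ w and property* (there is r > 0 such that for every δ > 0 there exist equal-length δ-cycles in CR(f) through z and through w staying at distance greater than r at each step). -/
import Mathlib


open Metric Filter Set
open scoped Classical

section Defs

variable {X : Type*} [MetricSpace X]

/-- `(c i)_{i=0}^k` is a δ-chain of `f`. -/
def IsChain' (f : X → X) (δ : ℝ) (c : ℕ → X) (k : ℕ) : Prop :=
  ∀ i < k, dist (f (c i)) (c (i + 1)) ≤ δ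

/-- The chain recurrent set of `f`. -/
def CR (f : X → X) : Set X :=
  {x | ∀ δ > 0, ∃ k > 0, ∃ c : ℕ → X, IsChain' f δ c k ∧ c 0 = x ∧ c k = x}

/-- The chain relation `~` on `CR f`. -/
def ChainRel (f : X → X) (x y : X) : Prop :=
  ∀ δ > 0, ∃ m > 0, ∃ N > 0, ∀ n ≥ N,
    (∃ c : ℕ → X, IsChain' f δ c (m * n) ∧ (∀ i ≤ m * n, c i ∈ CR f) ∧
      c 0 = x ∧ c (m * n) = y) ∧
    (∃ c : ℕ → X, IsChain' f δ c (m * n) ∧ (∀ i ≤ m * n, c i ∈ CR f) ∧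
      c 0 = y ∧ c (m * n) = x)

/-- Property* for a pair `(z, w)`, with cycles lying in `CR f`. -/
def PropertyStar (f : X → X) (z w : X) : Prop :=
  ∃ r > 0, ∀ δ > 0, ∃ k > 0, ∃ c c' : ℕ → X,
    IsChain' f δ c k ∧ IsChain' f δ c' k ∧
    (∀ i ≤ k, c i ∈ CR f) ∧ (∀ i ≤ k, c' i ∈ CR f) ∧
    c 0 = z ∧ c k = z ∧ c' 0 = w ∧ c' k = w ∧
    ∀ i ≤ k, dist (c i) (c' i) > r

/-- Property* for a pair `(z, w)` (cycles not required to lie in `CR f`). -/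
def PropertyStar' (f : X → X) (z w : X) : Prop :=
  ∃ r > 0, ∀ δ > 0, ∃ k > 0, ∃ c c' : ℕ → X,
    IsChain' f δ c k ∧ IsChain' f δ c' k ∧
    c 0 = z ∧ c k = z ∧ c' 0 = w ∧ c' k = w ∧
    ∀ i ≤ k, dist (c i) (c' i) > r

/-- Omega-limit set of the point `(x, y)` under `f × f`. -/
def OmegaLimit2 (f : X → X) (x y : X) : Set (X × X) :=
  {p | ∃ φ : ℕ → ℕ, StrictMono φ ∧
    Tendsto (fun n => (f^[φ n] x, f^[φ n] y)) atTop (nhds p)}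

/-- Omega-limit set of a point under `f`. -/
def OmegaLimit1 (f : X → X) (x : X) : Set X :=
  {p | ∃ φ : ℕ → ℕ, StrictMono φ ∧ Tendsto (fun n => f^[φ n] x) atTop (nhds p)}

/-- `(x, y)` is a DC1-pair for `f`. -/
def DC1Pair (f : X → X) (x y : X) : Prop :=
  (∀ δ > 0, Filter.limsup (fun n : ℕ =>
      (((Finset.range n).filter fun i => dist (f^[i] x) (f^[i] y) < δ).card : ℝ) / n)
      Filter.atTop = 1) ∧
  (∃ δ₀ > 0, Filter.limsup (fun n : ℕ =>
      (((Finset.range n).filter fun i => dist (f^[i] x) (f^[i] y) > δ₀).card : ℝ) / n)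
      Filter.atTop = 1)

/-- `f` exhibits distributional chaos of type 1. -/
def ExhibitsDC1 (f : X → X) : Prop :=
  ∃ S : Set X, ¬ S.Countable ∧ ∀ x ∈ S, ∀ y ∈ S, x ≠ y → DC1Pair f x y

/-- `(x, y)` is a Li-Yorke pair for `f`. -/
def LiYorkePair (f : X → X) (x y : X) : Prop :=
  Filter.liminf (fun n => dist (f^[n] x) (f^[n] y)) Filter.atTop = 0 ∧
  Filter.limsup (fun n => dist (f^[n] x) (f^[n] y)) Filter.atTop > 0

/-- `(x, y)` is a proximal pair for `f`. -/
def ProximalPair (f : X → X) (x y : X) : Prop :=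
  Filter.liminf (fun n => dist (f^[n] x) (f^[n] y)) Filter.atTop = 0

/-- `(x, y)` is a distal pair for `f`. -/
def DistalPair (f : X → X) (x y : X) : Prop :=
  0 < ⨅ n : ℕ, dist (f^[n] x) (f^[n] y)

/-- `f` has the limit shadowing property. -/
def LimitShadowing (f : X → X) : Prop :=
  ∀ x : ℕ → X, Tendsto (fun i => dist (f (x i)) (x (i + 1))) atTop (nhds 0) →
    ∃ p : X, Tendsto (fun i => dist (f^[i] p) (x i)) atTop (nhds 0)

/-- The restriction of `f` to `CR f` has the shadowing property. -/
def ShadowingOnCR (f : X → X) : Prop :=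
  ∀ ε > 0, ∃ δ > 0, ∀ x : ℕ → X, (∀ i, x i ∈ CR f) →
    (∀ i, dist (f (x i)) (x (i + 1)) ≤ δ) →
    ∃ p ∈ CR f, ∀ i, dist (f^[i] p) (x i) ≤ ε

/-- Topological entropy of `f` relative to the cover `U`. -/
noncomputable def entropyOfCover (f : X → X) {ι : Type*} (U : ι → Set X) : ℝ :=
  Filter.limsup (fun n : ℕ =>
    Real.log ((sInf {m : ℕ | ∃ s : Finset (Fin n → ι), s.card = m ∧
      (⋃ g ∈ s, ⋂ i : Fin n, f^[(i : ℕ)] ⁻¹' U (g i)) = Set.univ} : ℕ) : ℝ) / n)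
    Filter.atTop

/-- `(x, y)` is an entropy pair for `f`. -/
def EntropyPair (f : X → X) (x y : X) : Prop :=
  x ≠ y ∧ ∀ A B : Set X, IsClosed A → IsClosed B → x ∈ interior A → y ∈ interior B →
    Disjoint A B → 0 < entropyOfCover f (fun b : Bool => if b then Aᶜ else Bᶜ)

end Defs

section Aux
variable {X : Type*} [MetricSpace X]

/-- `p` is an accumulation point of the sequence `u`. -/
def AccOf (u : ℕ → X) (p : X) : Prop := ∀ ε > 0, ∀ M : ℕ, ∃ t ≥ M, dist (u t) p < ε

lemma accOf_of_subseq {u : ℕ → X} {p : X} {φ : ℕ → ℕ} (hφ : ∀ n, n ≤ φ n)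
    (h : Tendsto (fun n => u (φ n)) atTop (nhds p)) : AccOf u p := by
  intro ε hε M
  rcases (Metric.tendsto_atTop.1 h) ε hε with ⟨N, hN⟩
  exact ⟨φ (max N M), le_trans (le_max_right _ _) (hφ _), hN _ (le_max_left _ _)⟩

lemma AccOf.exists_subseq {u : ℕ → X} {p : X} (h : AccOf u p) :
    ∃ φ : ℕ → ℕ, StrictMono φ ∧ Tendsto (fun n => u (φ n)) atTop (nhds p) := by
  have H : ∀ n M : ℕ, ∃ t ≥ M, dist (u t) p < 1 / (n + 1) := fun n M =>
    h (1 / (n + 1)) (by positivity) M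
  set φ : ℕ → ℕ := fun n => Nat.rec (H 0 0).choose (fun n ih => (H (n + 1) (ih + 1)).choose) n
    with hφdef
  have hstep : ∀ n, φ (n + 1) = (H (n + 1) (φ n + 1)).choose := fun n => rfl
  have hmono : StrictMono φ := by
    apply strictMono_nat_of_lt_succ
    intro n
    rw [hstep]
    have := (H (n + 1) (φ n + 1)).choose_spec.1
    omega
  have hdist : ∀ n, dist (u (φ n)) p < 1 / (n + 1) := by
    intro n
    cases n with
    | zero => exact (H 0 0).choose_spec.2
    | succ n => rw [hstep]; exact (H (n + 1) (φ n + 1)).choose_spec.2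
  refine ⟨φ, hmono, Metric.tendsto_atTop.2 ?_⟩
  intro ε hε
  obtain ⟨N, hN⟩ := exists_nat_one_div_lt hε
  refine ⟨N, fun n hn => lt_trans (lt_of_lt_of_le (hdist n) ?_) hN⟩
  apply one_div_le_one_div_of_le (by positivity)
  exact_mod_cast by omega

/-- Master chain-segment lemma. -/
lemma seg_chain (f : X → X) (δ : ℝ) (a b : X) (v : ℕ → X) (n₁ n₂ : ℕ)
    (hn : n₁ + 2 ≤ n₂)
    (hA : dist (f a) (v (n₁ + 1)) ≤ δ)
    (hB : ∀ i, n₁ + 1 ≤ i → i + 2 ≤ n₂ → dist (f (v i)) (v (i + 1)) ≤ δ)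
    (hC : dist (f (v (n₂ - 1))) b ≤ δ) :
    IsChain' f δ (fun i => if i = 0 then a else if i < n₂ - n₁ then v (n₁ + i) else b)
      (n₂ - n₁) := by
  intro i hi
  rcases Nat.eq_zero_or_pos i with h0 | h0
  · subst h0
    simp only [if_pos rfl]
    have h1 : (1 : ℕ) ≠ 0 := one_ne_zero
    by_cases h2 : 1 < n₂ - n₁
    · simp only [if_neg h1, if_pos h2]; exact hA
    · omega
  · have hne : i ≠ 0 := by omega
    have hilt : i < n₂ - n₁ := hi
    simp only [if_neg hne, if_pos hilt]
    by_cases h2 : i + 1 < n₂ - n₁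
    · have hne1 : i + 1 ≠ 0 := by omega
      simp only [if_neg hne1, if_pos h2]
      exact hB (n₁ + i) (by omega) (by omega)
    · -- i + 1 = n₂ - n₁, last step
      have hne1 : i + 1 ≠ 0 := by omega
      simp only [if_neg hne1, if_neg h2]
      have : n₁ + i = n₂ - 1 := by omega
      rw [this]
      exact hC

lemma chain_concat {f : X → X} {δ : ℝ} {c e : ℕ → X} {k l : ℕ} (hk : 0 < k)
    (hc : IsChain' f δ c k) (he : IsChain' f δ e l) (hce : c k = e 0) :
    IsChain' f δ (fun i => if i < k then c i else e (i - k)) (k + l) := by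
  intro i hi
  by_cases h1 : i < k
  · simp only [if_pos h1]
    by_cases h2 : i + 1 < k
    · simp only [if_pos h2]; exact hc i h1
    · simp only [if_neg h2]
      have h3 : i + 1 - k = 0 := by omega
      have h4 : k = i + 1 := by omega
      rw [h3, ← hce, h4]
      exact hc i h1
  · simp only [if_neg h1, if_neg (show ¬ i + 1 < k by omega)]
    have : i + 1 - k = (i - k) + 1 := by omega
    rw [this]
    exact he (i - k) (by omega)

lemma cycle_pow_chain {f : X → X} {δ : ℝ} {cz d : ℕ → X} {m : ℕ} {z w : X} (hm : 0 < m)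
    (hcz : IsChain' f δ cz m) (hcz0 : cz 0 = z) (hczm : cz m = z)
    (hmem : ∀ i ≤ m, cz i ∈ CR f)
    (hd : IsChain' f δ d m) (hd0 : d 0 = z) (hdm : d m = w) (hdmem : ∀ i ≤ m, d i ∈ CR f) :
    ∀ n, 1 ≤ n → ∃ c : ℕ → X, IsChain' f δ c (m * n) ∧ (∀ i ≤ m * n, c i ∈ CR f) ∧
      c 0 = z ∧ c (m * n) = w := by
  intro n hn
  induction n with
  | zero => omega
  | succ n ih =>
    rcases Nat.eq_zero_or_pos n with h0 | h0
    · subst h0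
      exact ⟨d, by simpa using hd, by simpa using hdmem, hd0, by simpa using hdm⟩
    · obtain ⟨c, hc, hcmem, hc0, hcend⟩ := ih h0
      refine ⟨fun i => if i < m then cz i else c (i - m), ?_, ?_, ?_, ?_⟩
      · have := chain_concat hm hcz hc (by rw [hczm, hc0])
        have heq : m * (n + 1) = m + m * n := by ring
        rw [heq]
        exact this
      · intro i hi
        by_cases h1 : i < m
        · simp only [if_pos h1]; exact hmem i h1.le
        · simp only [if_neg h1]
          have heq : m * (n + 1) = m + m * n := by ring
          exact hcmem (i - m) (by omega)
      · simp only [if_pos hm, hcz0]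
      · have h1 : ¬ m * (n + 1) < m := by nlinarith
        simp only [if_neg h1]
        have : m * (n + 1) - m = m * n := by ring_nf; omega
        rw [this, hcend]

/-- Uniform continuity, packaged. -/
lemma unif_cont {X : Type*} [MetricSpace X] [CompactSpace X] {f : X → X} (hf : Continuous f) :
    ∀ δ > (0 : ℝ), ∃ ε > 0, ε ≤ δ ∧ ∀ a b : X, dist a b < ε → dist (f a) (f b) ≤ δ := by
  intro δ hδ
  obtain ⟨ε, hε, huc⟩ := Metric.uniformContinuous_iff.1
    (CompactSpace.uniformContinuous_of_continuous hf) δ hδ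
  refine ⟨min ε δ, by positivity, min_le_right _ _, fun a b hab => ?_⟩
  exact (huc (lt_of_lt_of_le hab (min_le_left _ _))).le

lemma mem_CR_of_acc {X : Type*} [MetricSpace X] [CompactSpace X] {f : X → X}
    (hf : Continuous f) {q z : X} (h : AccOf (fun t => f^[t] q) z) : z ∈ CR f := by
  intro δ hδ
  obtain ⟨ε, hε, hεδ, huc⟩ := unif_cont hf δ hδ
  obtain ⟨n₁, -, h₁⟩ := h ε hε 0
  obtain ⟨n₂, hn₂, h₂⟩ := h ε hε (n₁ + 2)
  refine ⟨n₂ - n₁, by omega, _,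
    seg_chain f δ z z (fun t => f^[t] q) n₁ n₂ hn₂ ?_ ?_ ?_, ?_, ?_⟩
  · show dist (f z) (f^[n₁ + 1] q) ≤ δ
    rw [Function.iterate_succ_apply']
    exact huc _ _ (by rw [dist_comm]; exact h₁)
  · intro i _ _
    show dist (f (f^[i] q)) (f^[i + 1] q) ≤ δ
    rw [Function.iterate_succ_apply']
    simp [hδ.le]
  · show dist (f (f^[n₂ - 1] q)) z ≤ δ
    have h5 : f^[n₂] q = f (f^[n₂ - 1] q) := by
      conv_lhs => rw [show n₂ = n₂ - 1 + 1 from by omega]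
      rw [Function.iterate_succ_apply']
    rw [← h5]
    exact le_trans (le_of_lt h₂) hεδ
  · simp
  · rw [if_neg (by omega : ¬ n₂ - n₁ = 0), if_neg (lt_irrefl (n₂ - n₁))]

lemma approx_CR {X : Type*} [MetricSpace X] [CompactSpace X] {f : X → X}
    (hf : Continuous f) (x : X) :
    ∀ ε > (0 : ℝ), ∃ M : ℕ, ∀ t ≥ M, ∃ x' ∈ CR f, dist (f^[t] x) x' < ε := by
  intro ε hε
  by_contra hcon
  push_neg at hcon
  choose T hT1 hT2 using hcon
  obtain ⟨z', -, θ, hθ, hθt⟩ := isCompact_univ.tendsto_subseq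
    (fun M => Set.mem_univ (f^[T M] x))
  have hz' : z' ∈ CR f := by
    apply mem_CR_of_acc hf
    apply accOf_of_subseq (u := fun t => f^[t] x) (φ := fun k => T (θ k))
    · exact fun k => le_trans (hθ.le_apply) (hT1 (θ k))
    · exact hθt
  obtain ⟨N, hN⟩ := Metric.tendsto_atTop.1 hθt ε hε
  exact absurd (hN N le_rfl) (not_lt.2 (hT2 (θ N) z' hz'))

lemma dist_fst_le' {Y : Type*} [MetricSpace Y] (p q : Y × Y) : dist p.1 q.1 ≤ dist p q := by
  rw [Prod.dist_eq]; exact le_max_left _ _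

lemma dist_snd_le' {Y : Type*} [MetricSpace Y] (p q : Y × Y) : dist p.2 q.2 ≤ dist p q := by
  rw [Prod.dist_eq]; exact le_max_right _ _

lemma iterF (f : X → X) : ∀ (n : ℕ) (p : X × X),
    (fun q : X × X => (f q.1, f q.2))^[n] p = (f^[n] p.1, f^[n] p.2) := by
  intro n
  induction n with
  | zero => intro p; simp
  | succ n ih =>
    intro p
    rw [Function.iterate_succ_apply', ih, Function.iterate_succ_apply',
      Function.iterate_succ_apply']

lemma base_chain {f : X → X} {δ ε : ℝ}
    (hδ : 0 < δ) (hε : 0 < ε) (hεδ : ε ≤ δ / 3)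
    (huc : ∀ a b : X, dist a b < ε → dist (f a) (f b) ≤ δ / 3)
    (o v : ℕ → X) (a b : X) (s₁ s₂ : ℕ) (hs : s₁ + 2 ≤ s₂)
    (hvo : ∀ i, s₁ ≤ i → i ≤ s₂ → dist (o i) (v i) < ε)
    (horb : ∀ i, s₁ ≤ i → i + 1 ≤ s₂ → dist (f (o i)) (o (i + 1)) < ε)
    (ha : dist (o s₁) a < ε) (hb : dist (o s₂) b < ε)
    (hvCR : ∀ i, s₁ ≤ i → i ≤ s₂ → v i ∈ CR f) (haCR : a ∈ CR f) (hbCR : b ∈ CR f) :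
    ∃ c : ℕ → X, IsChain' f δ c (s₂ - s₁) ∧ (∀ i ≤ s₂ - s₁, c i ∈ CR f) ∧
      c 0 = a ∧ c (s₂ - s₁) = b ∧ ∀ i, 0 < i → i < s₂ - s₁ → c i = v (s₁ + i) := by
  refine ⟨_, seg_chain f δ a b v s₁ s₂ hs ?_ ?_ ?_, ?_, ?_, ?_, ?_⟩
  · calc dist (f a) (v (s₁ + 1))
        ≤ dist (f a) (f (o s₁)) + dist (f (o s₁)) (o (s₁ + 1))
          + dist (o (s₁ + 1)) (v (s₁ + 1)) := dist_triangle4 _ _ _ _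
      _ ≤ δ/3 + ε + ε :=
          add_le_add (add_le_add (huc _ _ (by rw [dist_comm]; exact ha))
            (horb s₁ le_rfl (by omega)).le) (hvo (s₁+1) (by omega) (by omega)).le
      _ ≤ δ := by linarith
  · intro i h1 h2
    calc dist (f (v i)) (v (i + 1))
        ≤ dist (f (v i)) (f (o i)) + dist (f (o i)) (o (i + 1))
          + dist (o (i + 1)) (v (i + 1)) := dist_triangle4 _ _ _ _
      _ ≤ δ/3 + ε + ε :=
          add_le_add (add_le_add (huc _ _ (by rw [dist_comm]; exact hvo i (by omega) (by omega)))
            (horb i (by omega) (by omega)).le) (hvo (i+1) (by omega) (by omega)).le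
      _ ≤ δ := by linarith
  · have e : s₂ - 1 + 1 = s₂ := by omega
    calc dist (f (v (s₂ - 1))) b
        ≤ dist (f (v (s₂ - 1))) (f (o (s₂ - 1))) + dist (f (o (s₂ - 1))) (o (s₂ - 1 + 1))
          + dist (o (s₂ - 1 + 1)) b := dist_triangle4 _ _ _ _
      _ ≤ δ/3 + ε + ε :=
          add_le_add (add_le_add (huc _ _ (by rw [dist_comm]; exact hvo _ (by omega) (by omega)))
            (horb _ (by omega) (by omega)).le) (by rw [e]; exact hb.le)
      _ ≤ δ := by linarith
  · intro i hi
    by_cases h0 : i = 0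
    · simp [h0, haCR]
    · by_cases h1 : i < s₂ - s₁
      · simp only [if_neg h0, if_pos h1]
        exact hvCR _ (by omega) (by omega)
      · simp only [if_neg h0, if_neg h1]
        exact hbCR
  · simp
  · rw [if_neg (by omega : ¬ (s₂ - s₁ = 0)), if_neg (lt_irrefl _)]
  · intro i h0 h1
    simp only [if_neg (by omega : ¬ i = 0), if_pos h1]

end Aux

section Density
open Finset

lemma density_limsup_lt_false {P : ℕ → Prop} {c : ℝ} (hc : c < 1)
    (hev : ∀ᶠ n : ℕ in Filter.atTop, (((Finset.range n).filter P).card : ℝ) / n ≤ c)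
    (h : Filter.limsup (fun n : ℕ => (((Finset.range n).filter P).card : ℝ) / n)
      Filter.atTop = 1) : False := by
  have h0 : ∀ n : ℕ, (0 : ℝ) ≤ (((Finset.range n).filter P).card : ℝ) / n := by
    intro n; positivity
  have := Filter.limsup_le_of_le
    (IsBoundedUnder.isCoboundedUnder_le (isBoundedUnder_of ⟨0, h0⟩)) hev
  rw [h] at this
  linarith

lemma exists_ge_of_limsup_one {P : ℕ → Prop}
    (h : Filter.limsup (fun n : ℕ => (((Finset.range n).filter P).card : ℝ) / n)
      Filter.atTop = 1) : ∀ M : ℕ, ∃ t ≥ M, P t := by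
  intro M
  by_contra hcon
  push_neg at hcon
  refine density_limsup_lt_false (c := 1/2) (by norm_num) ?_ h
  filter_upwards [Filter.eventually_ge_atTop (2 * M + 2)] with n hn
  have hsub : (Finset.range n).filter P ⊆ Finset.range M := by
    intro i hi
    simp only [Finset.mem_filter, Finset.mem_range] at hi ⊢
    by_contra hiM
    exact hcon i (by omega) hi.2
  have hcard : ((Finset.range n).filter P).card ≤ M :=
    le_trans (Finset.card_le_card hsub) (by simp)
  have hn0 : (0 : ℝ) < n := by
    have : 0 < n := by omega
    exact_mod_cast this
  rw [div_le_iff₀ hn0]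
  have : (((Finset.range n).filter P).card : ℝ) ≤ M := by exact_mod_cast hcard
  have hMn : (2 * M + 2 : ℝ) ≤ n := by exact_mod_cast hn
  linarith

lemma exists_run_of_limsup_one {P : ℕ → Prop}
    (h : Filter.limsup (fun n : ℕ => (((Finset.range n).filter P).card : ℝ) / n)
      Filter.atTop = 1) : ∀ L M : ℕ, ∃ a ≥ M, ∀ j ≤ L, P (a + j) := by
  intro L M
  by_contra hcon
  push_neg at hcon
  have hcon' : ∀ b : ℕ, ∃ j, j ≤ L ∧ ¬ P (M + b * (L + 1) + j) := by
    intro b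
    obtain ⟨j, hj1, hj2⟩ := hcon (M + b * (L + 1)) (by omega)
    exact ⟨j, hj1, hj2⟩
  choose J hJL hJP using hcon'
  set g : ℕ → ℕ := fun b => M + b * (L + 1) + J b with hg
  have hgmono : StrictMono g := by
    apply strictMono_nat_of_lt_succ
    intro b
    have e1 : (b + 1) * (L + 1) = b * (L + 1) + (L + 1) := by ring
    have e2 := hJL b
    have e3 := hJL (b + 1)
    simp only [hg]
    omega
  have key : ∀ n : ℕ, 2 * M + 4 * L + 2 ≤ n →
      (2 * L + 2) * ((Finset.range n).filter P).card ≤ (2 * L + 1) * n := by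
    intro n hn
    obtain ⟨B, hB1, hB2⟩ : ∃ B : ℕ, (L + 1) * B ≤ n - (M + L) ∧
        n - (M + L) < (L + 1) * B + (L + 1) := by
      have hdm := Nat.div_add_mod (n - (M + L)) (L + 1)
      have hml : (n - (M + L)) % (L + 1) < L + 1 :=
        Nat.mod_lt _ (by omega)
      generalize (n - (M + L)) / (L + 1) = B at hdm
      generalize (n - (M + L)) % (L + 1) = R at hdm hml
      exact ⟨B, by omega, by omega⟩
    have hgb : ∀ b, b < B → g b < n := by
      intro b hb
      have e1 : (b + 1) * (L + 1) ≤ B * (L + 1) := Nat.mul_le_mul_right _ (by omega)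
      have e3 : (b + 1) * (L + 1) = b * (L + 1) + (L + 1) := by ring
      have e5 : B * (L + 1) = (L + 1) * B := by ring
      have e4 := hJL b
      simp only [hg]
      omega
    have himg : (Finset.range B).image g ⊆ (Finset.range n).filter (fun i => ¬ P i) := by
      intro i hi
      simp only [Finset.mem_image, Finset.mem_range] at hi
      obtain ⟨b, hb, rfl⟩ := hi
      simp only [Finset.mem_filter, Finset.mem_range]
      exact ⟨hgb b hb, hJP b⟩
    have hcardneg : B ≤ ((Finset.range n).filter (fun i => ¬ P i)).card := by
      calc B = ((Finset.range B).image g).card := by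
              rw [Finset.card_image_of_injective _ hgmono.injective, Finset.card_range]
        _ ≤ _ := Finset.card_le_card himg
    have hsum : ((Finset.range n).filter P).card
        + ((Finset.range n).filter (fun i => ¬ P i)).card = n := by
      rw [Finset.card_filter_add_card_filter_not, Finset.card_range]
    have hcardP : ((Finset.range n).filter P).card ≤ n - B := by omega
    have hBn : B ≤ n := by
      have hle : B ≤ (L + 1) * B := Nat.le_mul_of_pos_left B (by omega)
      omega
    have mono : (2 * L + 2) * ((Finset.range n).filter P).card ≤ (2 * L + 2) * (n - B) :=
      Nat.mul_le_mul_left _ hcardP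
    have e6 : (2 * L + 2) * (n - B) + (2 * L + 2) * B = (2 * L + 2) * n := by
      rw [← Nat.mul_add]
      congr 1
      omega
    have e7 : (2 * L + 2) * B = 2 * ((L + 1) * B) := by ring
    have e8 : (2 * L + 2) * n = (2 * L + 1) * n + n := by ring
    omega
  refine density_limsup_lt_false (c := (2 * L + 1 : ℝ) / (2 * L + 2)) ?_ ?_ h
  · rw [div_lt_one (by positivity)]
    linarith
  · filter_upwards [Filter.eventually_ge_atTop (2 * M + 4 * L + 2)] with n hn
    have hn0 : (0 : ℝ) < n := by
      have : 0 < n := by omega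
      exact_mod_cast this
    have hc2 := key n hn
    have hc3 : (2 * L + 2 : ℝ) * (((Finset.range n).filter P).card : ℝ)
        ≤ (2 * L + 1 : ℝ) * n := by exact_mod_cast hc2
    rw [div_le_div_iff₀ hn0 (by positivity)]
    linarith

end Density


/-- a DC1-pair yields an omega-limit pair with the chain relation
and property*. -/
theorem dc1Pair_yields_propertyStar_pair {X : Type*} [MetricSpace X] [CompactSpace X]
    (f : X → X) (hf : Continuous f) (x y : X) (h : DC1Pair f x y) :
    ∃ p ∈ OmegaLimit2 f x y, p.1 ∈ CR f ∧ p.2 ∈ CR f ∧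
      ChainRel f p.1 p.2 ∧ PropertyStar f p.1 p.2 := by
  obtain ⟨hprox, δ₀, hδ₀, hfar⟩ := h
  set F : X × X → X × X := fun q => (f q.1, f q.2) with hFdef
  have hFc : Continuous F := (hf.comp continuous_fst).prodMk (hf.comp continuous_snd)
  have hFit : ∀ (n : ℕ) (p : X × X), F^[n] p = (f^[n] p.1, f^[n] p.2) := iterF f
  set u : ℕ → X × X := fun t => (f^[t] x, f^[t] y) with hu
  have hFu : ∀ (j t : ℕ), F^[j] (u t) = u (t + j) := by
    intro j t
    rw [hFit]
    simp only [hu]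
    rw [← Function.iterate_add_apply, ← Function.iterate_add_apply]
    congr 2 <;> omega
  have hrun : ∀ L M : ℕ, ∃ a ≥ M, ∀ j ≤ L, dist (f^[a+j] x) (f^[a+j] y) > δ₀ :=
    exists_run_of_limsup_one hfar
  have hclose : ∀ ε > (0:ℝ), ∀ M : ℕ, ∃ t ≥ M, dist (f^[t] x) (f^[t] y) < ε := by
    intro ε hε M
    exact exists_ge_of_limsup_one (hprox ε hε) M
  have haux : ∀ k : ℕ, ∃ a, a ≥ k ∧ ∀ j ≤ k, dist (f^[a+j] x) (f^[a+j] y) > δ₀ := by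
    intro k
    obtain ⟨a, ha, h2⟩ := hrun k k
    exact ⟨a, ha, h2⟩
  choose a ha hrunA using haux
  obtain ⟨p₀, -, ψ, hψ, hψt⟩ := isCompact_univ.tendsto_subseq (fun k => Set.mem_univ (u (a k)))
  have hshift : ∀ j : ℕ, Tendsto (fun k => u (a (ψ k) + j)) atTop (nhds (F^[j] p₀)) := by
    intro j
    have hcont : Continuous (F^[j]) := hFc.iterate j
    have h2 := (hcont.tendsto p₀).comp hψt
    exact Filter.Tendsto.congr (fun k => hFu j (a (ψ k))) h2
  have hSEPp₀ : ∀ j : ℕ, δ₀ ≤ dist (f^[j] p₀.1) (f^[j] p₀.2) := by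
    intro j
    have h1 : Tendsto (fun k => dist (u (a (ψ k) + j)).1 (u (a (ψ k) + j)).2) atTop
        (nhds (dist (F^[j] p₀).1 (F^[j] p₀).2)) :=
      ((continuous_fst.tendsto _).comp (hshift j)).dist
        ((continuous_snd.tendsto _).comp (hshift j))
    have h2 : δ₀ ≤ dist (F^[j] p₀).1 (F^[j] p₀).2 := by
      refine ge_of_tendsto h1 ?_
      filter_upwards [Filter.eventually_ge_atTop j] with k hk
      have hjk : j ≤ ψ k := le_trans hk hψ.le_apply
      exact (hrunA (ψ k) j hjk).le
    rwa [hFit] at h2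
  have hAccFj : ∀ j : ℕ, AccOf u (F^[j] p₀) := by
    intro j
    refine accOf_of_subseq (φ := fun k => a (ψ k) + j) (fun k => ?_) (hshift j)
    show k ≤ a (ψ k) + j
    have h4 := ha (ψ k)
    have h5 : k ≤ ψ k := hψ.le_apply
    omega
  obtain ⟨zw, -, σ, hσ, hσt⟩ := isCompact_univ.tendsto_subseq (fun n => Set.mem_univ (F^[n] p₀))
  have hAccOrb : AccOf (fun n => F^[n] p₀) zw := accOf_of_subseq (fun n => hσ.le_apply) hσt
  have hAccUzw : AccOf u zw := by
    intro ε hε M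
    obtain ⟨j, -, hj⟩ := hAccOrb (ε/2) (by linarith) 0
    obtain ⟨t, ht, htd⟩ := hAccFj j (ε/2) (by linarith) M
    exact ⟨t, ht, lt_of_le_of_lt (dist_triangle _ (F^[j] p₀) _) (by linarith)⟩
  have hSEPzw : δ₀ ≤ dist zw.1 zw.2 := by
    have h1 : Tendsto (fun n => dist (F^[σ n] p₀).1 (F^[σ n] p₀).2) atTop
        (nhds (dist zw.1 zw.2)) :=
      ((continuous_fst.tendsto _).comp hσt).dist ((continuous_snd.tendsto _).comp hσt)
    refine ge_of_tendsto h1 ?_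
    filter_upwards with n
    rw [hFit]
    exact hSEPp₀ (σ n)
  have hAccx : AccOf (fun t => f^[t] x) zw.1 := by
    intro ε hε M
    obtain ⟨t, ht, htd⟩ := hAccUzw ε hε M
    exact ⟨t, ht, lt_of_le_of_lt (dist_fst_le' (u t) zw) htd⟩
  have hAccy : AccOf (fun t => f^[t] y) zw.2 := by
    intro ε hε M
    obtain ⟨t, ht, htd⟩ := hAccUzw ε hε M
    exact ⟨t, ht, lt_of_le_of_lt (dist_snd_le' (u t) zw) htd⟩
  have hz : zw.1 ∈ CR f := mem_CR_of_acc hf hAccx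
  have hw : zw.2 ∈ CR f := mem_CR_of_acc hf hAccy
  have hbodyx : ∀ j : ℕ, f^[j] p₀.1 ∈ CR f := by
    intro j
    refine mem_CR_of_acc hf (q := x) ?_
    intro ε hε M
    obtain ⟨t, ht, htd⟩ := hAccFj j ε hε M
    refine ⟨t, ht, ?_⟩
    have := lt_of_le_of_lt (dist_fst_le' (u t) (F^[j] p₀)) htd
    rwa [hFit] at this
  have hbodyy : ∀ j : ℕ, f^[j] p₀.2 ∈ CR f := by
    intro j
    refine mem_CR_of_acc hf (q := y) ?_
    intro ε hε M
    obtain ⟨t, ht, htd⟩ := hAccFj j ε hε M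
    refine ⟨t, ht, ?_⟩
    have := lt_of_le_of_lt (dist_snd_le' (u t) (F^[j] p₀)) htd
    rwa [hFit] at this
  have horbx : ∀ w : ℕ → ℕ, ∀ i : ℕ, dist (f (f^[i] x)) (f^[i+1] x) = 0 := by
    intro _ i
    rw [Function.iterate_succ_apply']
    simp
  refine ⟨zw, hAccUzw.exists_subseq, hz, hw, ?_, ?_⟩
  · -- ChainRel
    intro δ hδ
    have hδ3 : (0:ℝ) < δ/3 := by linarith
    obtain ⟨ε, hε, hεδ, hucε⟩ := unif_cont hf (δ/3) hδ3
    obtain ⟨Mx, hMx⟩ := approx_CR hf x ε hε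
    obtain ⟨My, hMy⟩ := approx_CR hf y ε hε
    set M₀ := max Mx My with hM₀
    have haxx : ∀ t : ℕ, ∃ x', M₀ ≤ t → x' ∈ CR f ∧ dist (f^[t] x) x' < ε := by
      intro t
      by_cases ht : M₀ ≤ t
      · obtain ⟨x', hx1, hx2⟩ := hMx t (le_trans (le_max_left _ _) ht)
        exact ⟨x', fun _ => ⟨hx1, hx2⟩⟩
      · exact ⟨zw.1, fun h' => absurd h' ht⟩
    have hayy : ∀ t : ℕ, ∃ y', M₀ ≤ t → y' ∈ CR f ∧ dist (f^[t] y) y' < ε := by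
      intro t
      by_cases ht : M₀ ≤ t
      · obtain ⟨y', hy1, hy2⟩ := hMy t (le_trans (le_max_right _ _) ht)
        exact ⟨y', fun _ => ⟨hy1, hy2⟩⟩
      · exact ⟨zw.2, fun h' => absurd h' ht⟩
    choose cx hcx using haxx
    choose cy hcy using hayy
    obtain ⟨s₁, hs₁M, hs₁⟩ := hAccUzw ε hε M₀
    obtain ⟨t, hts, htc⟩ := hclose ε hε (s₁ + 2)
    obtain ⟨s₂, hs₂t, hs₂⟩ := hAccUzw ε hε (t + 2)
    have hs12 : s₁ + 2 ≤ s₂ := by omega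
    have hd1x : dist (f^[s₁] x) zw.1 < ε := lt_of_le_of_lt (dist_fst_le' (u s₁) zw) hs₁
    have hd1y : dist (f^[s₁] y) zw.2 < ε := lt_of_le_of_lt (dist_snd_le' (u s₁) zw) hs₁
    have hd2x : dist (f^[s₂] x) zw.1 < ε := lt_of_le_of_lt (dist_fst_le' (u s₂) zw) hs₂
    have hd2y : dist (f^[s₂] y) zw.2 < ε := lt_of_le_of_lt (dist_snd_le' (u s₂) zw) hs₂
    have hswitch : dist (f (f^[t-1] x)) (f^[t] y) < ε := by
      have e : f (f^[t-1] x) = f^[t] x := by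
        conv_rhs => rw [show t = t - 1 + 1 from by omega]
        rw [Function.iterate_succ_apply']
      rw [e]
      exact htc
    have hswitch' : dist (f (f^[t-1] y)) (f^[t] x) < ε := by
      have e : f (f^[t-1] y) = f^[t] y := by
        conv_rhs => rw [show t = t - 1 + 1 from by omega]
        rw [Function.iterate_succ_apply']
      rw [e, dist_comm]
      exact htc
    -- base chains
    obtain ⟨czz, Hzz1, Hzz2, Hzz3, Hzz4, -⟩ :=
      base_chain hδ hε hεδ hucε (fun i => f^[i] x) cx zw.1 zw.1 s₁ s₂ hs12
        (fun i hi _ => (hcx i (by omega)).2)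
        (fun i _ _ => by
          show dist (f (f^[i] x)) (f^[i+1] x) < ε
          rw [Function.iterate_succ_apply']
          simpa using hε)
        hd1x hd2x (fun i hi _ => (hcx i (by omega)).1) hz hz
    obtain ⟨cww, Hww1, Hww2, Hww3, Hww4, -⟩ :=
      base_chain hδ hε hεδ hucε (fun i => f^[i] y) cy zw.2 zw.2 s₁ s₂ hs12
        (fun i hi _ => (hcy i (by omega)).2)
        (fun i _ _ => by
          show dist (f (f^[i] y)) (f^[i+1] y) < ε
          rw [Function.iterate_succ_apply']
          simpa using hε)
        hd1y hd2y (fun i hi _ => (hcy i (by omega)).1) hw hw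
    obtain ⟨czw, Hzw1, Hzw2, Hzw3, Hzw4, -⟩ :=
      base_chain hδ hε hεδ hucε (fun i => if i < t then f^[i] x else f^[i] y)
        (fun i => if i < t then cx i else cy i) zw.1 zw.2 s₁ s₂ hs12
        (fun i hi _ => by
          by_cases hit : i < t
          · simp only [if_pos hit]; exact (hcx i (by omega)).2
          · simp only [if_neg hit]; exact (hcy i (by omega)).2)
        (fun i hi hi2 => by
          by_cases h1 : i + 1 < t
          · simp only [if_pos (by omega : i < t), if_pos h1]
            rw [Function.iterate_succ_apply']
            simpa using hε
          · by_cases h2 : i < t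
            · have : i = t - 1 := by omega
              subst this
              simp only [if_pos h2, if_neg (by omega : ¬ t - 1 + 1 < t)]
              have e : t - 1 + 1 = t := by omega
              rw [e]
              exact hswitch
            · simp only [if_neg h2, if_neg (by omega : ¬ i + 1 < t)]
              rw [Function.iterate_succ_apply']
              simpa using hε)
        (by simp only [if_pos (by omega : s₁ < t)]; exact hd1x)
        (by simp only [if_neg (by omega : ¬ s₂ < t)]; exact hd2y)
        (fun i hi _ => by
          by_cases hit : i < t
          · simp only [if_pos hit]; exact (hcx i (by omega)).1
          · simp only [if_neg hit]; exact (hcy i (by omega)).1)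
        hz hw
    obtain ⟨cwz, Hwz1, Hwz2, Hwz3, Hwz4, -⟩ :=
      base_chain hδ hε hεδ hucε (fun i => if i < t then f^[i] y else f^[i] x)
        (fun i => if i < t then cy i else cx i) zw.2 zw.1 s₁ s₂ hs12
        (fun i hi _ => by
          by_cases hit : i < t
          · simp only [if_pos hit]; exact (hcy i (by omega)).2
          · simp only [if_neg hit]; exact (hcx i (by omega)).2)
        (fun i hi hi2 => by
          by_cases h1 : i + 1 < t
          · simp only [if_pos (by omega : i < t), if_pos h1]
            rw [Function.iterate_succ_apply']
            simpa using hε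
          · by_cases h2 : i < t
            · have : i = t - 1 := by omega
              subst this
              simp only [if_pos h2, if_neg (by omega : ¬ t - 1 + 1 < t)]
              have e : t - 1 + 1 = t := by omega
              rw [e]
              exact hswitch'
            · simp only [if_neg h2, if_neg (by omega : ¬ i + 1 < t)]
              rw [Function.iterate_succ_apply']
              simpa using hε)
        (by simp only [if_pos (by omega : s₁ < t)]; exact hd1y)
        (by simp only [if_neg (by omega : ¬ s₂ < t)]; exact hd2x)
        (fun i hi _ => by
          by_cases hit : i < t
          · simp only [if_pos hit]; exact (hcy i (by omega)).1
          · simp only [if_neg hit]; exact (hcx i (by omega)).1)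
        hw hz
    refine ⟨s₂ - s₁, by omega, 1, one_pos, fun n hn => ⟨?_, ?_⟩⟩
    · exact cycle_pow_chain (by omega) Hzz1 Hzz3 Hzz4 Hzz2 Hzw1 Hzw3 Hzw4 Hzw2 n hn
    · exact cycle_pow_chain (by omega) Hww1 Hww3 Hww4 Hww2 Hwz1 Hwz3 Hwz4 Hwz2 n hn
  · -- PropertyStar
    refine ⟨δ₀ / 2, by linarith, ?_⟩
    intro δ hδ
    have hδ3 : (0:ℝ) < δ/3 := by linarith
    obtain ⟨ε, hε, hεδ, hucε⟩ := unif_cont hf (δ/3) hδ3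
    obtain ⟨n₁, -, h₁⟩ := hAccOrb ε hε 0
    obtain ⟨n₂, hn₂, h₂⟩ := hAccOrb ε hε (n₁ + 2)
    have hd1x : dist (f^[n₁] p₀.1) zw.1 < ε := by
      have := lt_of_le_of_lt (dist_fst_le' (F^[n₁] p₀) zw) h₁
      rwa [hFit] at this
    have hd1y : dist (f^[n₁] p₀.2) zw.2 < ε := by
      have := lt_of_le_of_lt (dist_snd_le' (F^[n₁] p₀) zw) h₁
      rwa [hFit] at this
    have hd2x : dist (f^[n₂] p₀.1) zw.1 < ε := by
      have := lt_of_le_of_lt (dist_fst_le' (F^[n₂] p₀) zw) h₂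
      rwa [hFit] at this
    have hd2y : dist (f^[n₂] p₀.2) zw.2 < ε := by
      have := lt_of_le_of_lt (dist_snd_le' (F^[n₂] p₀) zw) h₂
      rwa [hFit] at this
    obtain ⟨c, Hc1, Hc2, Hc3, Hc4, Hc5⟩ :=
      base_chain hδ hε hεδ hucε (fun i => f^[i] p₀.1) (fun i => f^[i] p₀.1) zw.1 zw.1
        n₁ n₂ hn₂
        (fun i _ _ => by simpa using hε)
        (fun i _ _ => by
          show dist (f (f^[i] p₀.1)) (f^[i+1] p₀.1) < ε
          rw [Function.iterate_succ_apply']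
          simpa using hε)
        hd1x hd2x (fun i _ _ => hbodyx i) hz hz
    obtain ⟨c', Hc'1, Hc'2, Hc'3, Hc'4, Hc'5⟩ :=
      base_chain hδ hε hεδ hucε (fun i => f^[i] p₀.2) (fun i => f^[i] p₀.2) zw.2 zw.2
        n₁ n₂ hn₂
        (fun i _ _ => by simpa using hε)
        (fun i _ _ => by
          show dist (f (f^[i] p₀.2)) (f^[i+1] p₀.2) < ε
          rw [Function.iterate_succ_apply']
          simpa using hε)
        hd1y hd2y (fun i _ _ => hbodyy i) hw hw
    refine ⟨n₂ - n₁, by omega, c, c', Hc1, Hc'1, Hc2, Hc'2, Hc3, Hc4, Hc'3, Hc'4, ?_⟩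
    intro i hi
    by_cases h0 : i = 0
    · subst h0
      rw [Hc3, Hc'3]
      linarith
    · by_cases h1 : i < n₂ - n₁
      · rw [Hc5 i (by omega) h1, Hc'5 i (by omega) h1]
        have := hSEPp₀ (n₁ + i)
        linarith
      · have hik : i = n₂ - n₁ := by omega
        subst hik
        rw [Hc4, Hc'4]
        linarith
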